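/- In the butterfly graph with alphabet size σ ≥ 1 and dimension d ≥ 1, for every integer 0 ≤ ℓ ≤ d, the number of ordered pairs (s, s′) of strings of length d over the alphabet such that the left-layer vertices (s, 1) and (s′, 1) are at graph distance at most 2d − 2ℓ is at most σ^{2d−ℓ}. Equivalently, for two independent uniformly random strings s, s′, the probability that (s, 1) and (s′, 1) have distance at most 2d − 2ℓ is at most σ^{−ℓ}. -/

import Mathlib

/-- The butterfly graph with alphabet size `σ` and dimension `d`: vertices are
pairs `(s, i)` of a string `s : Fin d → Fin σ` and a layer `i : Fin (d+1)`;
`(s, i)` and `(s', i+1)` are adjacent iff `s` and `s'` agree in all positions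
except possibly position `i`. -/
def butterfly (σ d : ℕ) : SimpleGraph ((Fin d → Fin σ) × Fin (d + 1)) where
  Adj u v :=
    ∃ i : Fin d, ((u.2 = i.castSucc ∧ v.2 = i.succ) ∨ (v.2 = i.castSucc ∧ u.2 = i.succ)) ∧
      ∀ j : Fin d, j ≠ i → u.1 j = v.1 j
  symm := by
    refine ⟨?_⟩
    rintro u v ⟨i, hlay, hstr⟩
    exact ⟨i, by tauto, fun j hj => (hstr j hj).symm⟩
  loopless := by
    refine ⟨?_⟩
    rintro u ⟨i, (⟨h1, h2⟩ | ⟨h1, h2⟩), -⟩ <;>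
      · rw [h1] at h2
        exact absurd h2 (Fin.castSucc_lt_succ (i := i)).ne

/-- For every `0 ≤ ℓ ≤ d`, the number of ordered pairs `(s, s')` of strings
whose left-layer vertices `(s, 1)`, `(s', 1)` are at distance at most
`2d - 2ℓ` in the butterfly graph is at most `σ^{2d - ℓ}`; equivalently, two
uniformly random strings are at distance at most `2d - 2ℓ` with probability
at most `σ^{-ℓ}`. -/
lemma bf_layer {σ d : ℕ} {u v : (Fin d → Fin σ) × Fin (d + 1)}
    (w : (butterfly σ d).Walk u v) : (u.2 : ℕ) ≤ v.2 + w.length := by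
  induction w with
  | nil => simp
  | cons h p ih =>
    obtain ⟨i, hlay, -⟩ := id h
    rcases hlay with ⟨h1, h2⟩ | ⟨h1, h2⟩ <;>
      simp only [SimpleGraph.Walk.length_cons] <;>
      · have e1 := congrArg Fin.val h1
        have e2 := congrArg Fin.val h2
        simp [Fin.val_succ] at e1 e2
        omega

lemma bf_main {σ d : ℕ} {u v : (Fin d → Fin σ) × Fin (d + 1)}
    (w : (butterfly σ d).Walk u v) (j : Fin d) (h : u.1 j ≠ v.1 j) :
    ((j : ℕ) + 1 - u.2) + ((j : ℕ) + 1 - v.2) ≤ w.length := by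
  induction w with
  | nil => exact absurd rfl h
  | @cons a b c hab p ih =>
    obtain ⟨i, hlay, hagree⟩ := id hab
    have hlay' : ((a.2 : ℕ) = i ∧ (b.2 : ℕ) = i + 1) ∨ ((b.2 : ℕ) = i ∧ (a.2 : ℕ) = i + 1) := by
      rcases hlay with ⟨h1, h2⟩ | ⟨h1, h2⟩
      · exact Or.inl ⟨by rw [h1]; simp, by rw [h2]; simp⟩
      · exact Or.inr ⟨by rw [h1]; simp, by rw [h2]; simp⟩
    simp only [SimpleGraph.Walk.length_cons]
    by_cases hji : j = i
    · subst hji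
      have hb := bf_layer p
      omega
    · have hstep := hagree j hji
      have hbc : b.1 j ≠ c.1 j := by rw [← hstep]; exact h
      have := ih hbc
      omega

/-- hybrid string -/
def hyb {σ d : ℕ} (s s' : Fin d → Fin σ) (k : ℕ) : Fin d → Fin σ :=
  fun j => if (j : ℕ) < k then s' j else s j

lemma bf_reach_aux {σ d : ℕ} (s s' : Fin d → Fin σ) :
    ∀ k (hk : k ≤ d), (butterfly σ d).Reachable (s, 0) (hyb s s' k, ⟨k, by omega⟩) := by
  intro k
  induction k with
  | zero =>
    intro _
    have : hyb s s' 0 = s := by funext j; simp [hyb]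
    rw [this]
    rfl
  | succ k ih =>
    intro hk
    refine (ih (by omega)).trans (SimpleGraph.Adj.reachable ?_)
    refine ⟨⟨k, by omega⟩, Or.inl ⟨?_, ?_⟩, ?_⟩
    · apply Fin.ext; simp
    · apply Fin.ext; simp
    · intro j hj
      have hj' : (j : ℕ) ≠ k := fun hc => hj (Fin.ext hc)
      simp only [hyb]
      rcases lt_or_ge (j : ℕ) k with hlt | hge
      · rw [if_pos hlt, if_pos (by omega)]
      · rw [if_neg (by omega), if_neg (by omega)]

lemma bf_reach_layer {σ d : ℕ} (s : Fin d → Fin σ) :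
    ∀ k (hk : k ≤ d), (butterfly σ d).Reachable (s, 0) (s, ⟨k, by omega⟩) := by
  intro k
  induction k with
  | zero => intro _; rfl
  | succ k ih =>
    intro hk
    refine (ih (by omega)).trans (SimpleGraph.Adj.reachable ?_)
    refine ⟨⟨k, by omega⟩, Or.inl ⟨?_, ?_⟩, fun j _ => rfl⟩
    · apply Fin.ext; simp
    · apply Fin.ext; simp

lemma bf_reach {σ d : ℕ} (s s' : Fin d → Fin σ) :
    (butterfly σ d).Reachable (s, 0) (s', 0) := by
  have h1 := bf_reach_aux s s' d le_rfl
  have h2 : hyb s s' d = s' := by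
    funext j; simp [hyb, j.isLt]
  rw [h2] at h1
  exact h1.trans (bf_reach_layer s' d le_rfl).symm

lemma bf_tail_eq {σ d ℓ : ℕ} (hℓ : ℓ ≤ d) (s s' : Fin d → Fin σ)
    (h : (butterfly σ d).dist (s, 0) (s', 0) ≤ 2 * d - 2 * ℓ)
    (j : Fin d) (hj : d - ℓ ≤ (j : ℕ)) : s j = s' j := by
  by_contra hne
  obtain ⟨w, hw⟩ := (bf_reach s s').exists_walk_length_eq_dist
  have hlb := bf_main w j hne
  rw [hw] at hlb
  simp only [Fin.val_zero, Nat.sub_zero] at hlb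
  omega

theorem butterfly_close_pairs_card (σ d : ℕ) (hσ : 1 ≤ σ) (hd : 1 ≤ d)
    (ℓ : ℕ) (hℓ : ℓ ≤ d) :
    Nat.card {ss : (Fin d → Fin σ) × (Fin d → Fin σ) //
        (butterfly σ d).dist (ss.1, 0) (ss.2, 0) ≤ 2 * d - 2 * ℓ}
      ≤ σ ^ (2 * d - ℓ) := by
  set T := {ss : (Fin d → Fin σ) × (Fin d → Fin σ) //
        (butterfly σ d).dist (ss.1, 0) (ss.2, 0) ≤ 2 * d - 2 * ℓ}
  let f : T → (Fin d → Fin σ) × (Fin (d - ℓ) → Fin σ) :=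
    fun x => (x.1.1, fun j => x.1.2 (Fin.castLE (by omega) j))
  have hf : Function.Injective f := by
    rintro ⟨⟨s, s'⟩, hs⟩ ⟨⟨t, t'⟩, ht⟩ heq
    simp only [f, Prod.mk.injEq] at heq
    obtain ⟨h1, h2⟩ := heq
    have h3 : s' = t' := by
      funext j
      rcases lt_or_ge (j : ℕ) (d - ℓ) with hlt | hge
      · have := congrFun h2 ⟨(j : ℕ), hlt⟩
        simpa [Fin.castLE] using this
      · have e1 := bf_tail_eq hℓ s s' hs j hge
        have e2 := bf_tail_eq hℓ t t' ht j hge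
        rw [← e1, ← e2, h1]
    exact Subtype.ext (by simp [h1, h3])
  calc Nat.card T ≤ Nat.card ((Fin d → Fin σ) × (Fin (d - ℓ) → Fin σ)) :=
        Nat.card_le_card_of_injective f hf
    _ = σ ^ d * σ ^ (d - ℓ) := by simp [Nat.card_eq_fintype_card]
    _ = σ ^ (2 * d - ℓ) := by rw [← pow_add]; congr 1; omega
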